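/- For every crossing c of a virtual knot diagram, the Affine Index Polynomial weight W_±(c) computed from the Cheng-type integer labeling of arcs equals the wriggle number W(L_c) of the link obtained by orientedly smoothing c; consequently the Wriggle Polynomial equals the Affine Index Polynomial. -/

import Mathlib

open scoped Classical
open LaurentPolynomial

noncomputable section

/-- A Gauss diagram for an oriented virtual knot with `n` classical crossings: a circle
with `2 * n` marked points (positions in `ZMod (2*n)`, traversed in cyclic order), and for
each crossing `c` a signed oriented chord, recorded by the position `over c` of its
over-passage (head), the position `under c` of its under-passage (tail), and its sign. -/
structure GaussDiagram (n : ℕ) where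
  over' : Fin n → ZMod (2 * n)
  under : Fin n → ZMod (2 * n)
  sign : Fin n → ℤ
  endpoints_inj : Function.Injective
    (fun p : Fin n × Bool => if p.2 then over' p.1 else under p.1)
  sign_pm : ∀ c, sign c = 1 ∨ sign c = -1

namespace GaussDiagram

/-- `x` lies strictly inside the arc running forward (in the orientation of the circle)
from `a` to `b`. -/
def Between {m : ℕ} (a b x : ZMod m) : Prop :=
  (x - a).val < (b - a).val ∧ x ≠ a

variable {n : ℕ}

/-- After orientedly smoothing the crossing `c`, the first component of the resulting
2-component link `L_c` (the component carrying the dot placed on the incoming understrand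
of `c`) is the arc running forward from the over-passage of `c` to its under-passage. -/
def onComp1 (G : GaussDiagram n) (c : Fin n) (x : ZMod (2 * n)) : Prop :=
  Between (G.over' c) (G.under c) x

/-- The chords `c` and `d` intersect (interleave): exactly one endpoint of `d` lies in the
arc cut out by `c`; equivalently `d` becomes a linking crossing of the smoothed link `L_c`. -/
def Crosses (G : GaussDiagram n) (c d : Fin n) : Prop :=
  Xor' (G.onComp1 c (G.over' d)) (G.onComp1 c (G.under d))

/-- `d ∈ P_c`: `d` intersects `c` positively (traveling along the first component of `L_c`
one passes *over* `d`). -/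
def PosAt (G : GaussDiagram n) (c d : Fin n) : Prop :=
  G.Crosses c d ∧ G.onComp1 c (G.over' d)

/-- `d ∈ N_c`: `d` intersects `c` negatively (traveling along the first component of `L_c`
one passes *under* `d`). -/
def NegAt (G : GaussDiagram n) (c d : Fin n) : Prop :=
  G.Crosses c d ∧ G.onComp1 c (G.under d)

/-- The wriggle number `W(L_c) = lk_O(L_c) - lk_U(L_c)` of the ordered 2-component link
obtained by the oriented smoothing at `c`. -/
def wriggle (G : GaussDiagram n) (c : Fin n) : ℤ :=
  (∑ d ∈ Finset.univ.filter (fun d => G.PosAt c d), G.sign d)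
    - ∑ d ∈ Finset.univ.filter (fun d => G.NegAt c d), G.sign d

/-- The writhe: the sum of the signs of all crossings. -/
def writhe (G : GaussDiagram n) : ℤ := ∑ c, G.sign c

/-- The Wriggle Polynomial `W_K(t) = Σ_c sign(c) · t^{W(L_c)} - writhe(K)`, as a Laurent
polynomial over `ℤ`. -/
def wrigglePoly (G : GaussDiagram n) : LaurentPolynomial ℤ :=
  (∑ c, C (G.sign c) * T (G.wriggle c)) - C G.writhe

end GaussDiagram

namespace GaussDiagram

variable {n : ℕ}

/-- The change of affine label when passing (in the direction of orientation) the marked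
point `p` of the circle: passing the over-passage (head) of a chord `d` changes the label
by `-sign d`, passing its under-passage (tail) changes it by `+sign d` (so `o+` gives `-1`,
`u+` gives `+1`, `o-` gives `+1`, `u-` gives `-1`). -/
def delta (G : GaussDiagram n) (p : ZMod (2 * n)) : ℤ :=
  (∑ d ∈ Finset.univ.filter (fun d => G.over' d = p), -G.sign d)
    + ∑ d ∈ Finset.univ.filter (fun d => G.under d = p), G.sign d

/-- Kauffman's affine labeling of the arcs of the diagram: the arc of the circle running
from the marked point `a` to `a + 1` receives the label obtained by starting with label `0`
on the arc `(base, base + 1)` and applying the label changes `delta` at each marked point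
passed while traveling forward from the base arc to the arc `(a, a+1)`. -/
def labelFrom (G : GaussDiagram n) (base a : ZMod (2 * n)) : ℤ :=
  ∑ j ∈ Finset.range ((a - base).val), G.delta (base + (j : ZMod (2 * n)) + 1)

/-- The weight `W_±(c)` of a crossing computed from an arc labeling `ℓ` (where `ℓ p` is the
label of the arc `(p, p+1)`): for a positive crossing with incoming over-arc label `a` and
incoming under-arc label `b` it is `a - (b + 1)`; for a negative crossing it is
`a - (b - 1)` (equivalently, the paper's `b' - (a' - 1)` in its labeling of the arcs at a
negative crossing). -/
def weightWith (G : GaussDiagram n) (ℓ : ZMod (2 * n) → ℤ) (c : Fin n) : ℤ :=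
  if G.sign c = 1 then ℓ (G.over' c - 1) - (ℓ (G.under c - 1) + 1)
  else ℓ (G.over' c - 1) - (ℓ (G.under c - 1) - 1)

/-- The affine index weight `W_±(c)` computed from the affine labeling based at `base`. -/
def affineWeight (G : GaussDiagram n) (base : ZMod (2 * n)) (c : Fin n) : ℤ :=
  G.weightWith (G.labelFrom base) c

/-- The Affine Index Polynomial `Σ_c sign(c) · t^{W_±(c)} - writhe(K)` computed from the
affine labeling based at `base`. -/
def affinePoly (G : GaussDiagram n) (base : ZMod (2 * n)) : LaurentPolynomial ℤ :=
  (∑ c, C (G.sign c) * T (G.affineWeight base c)) - C G.writhe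

end GaussDiagram

namespace GaussDiagram

variable {n : ℕ}

lemma sum_range_eq_sum_filter [NeZero (2*n)] (F : ZMod (2*n) → ℤ) (u : ZMod (2*n))
    (m : ℕ) (hm : m ≤ 2*n) :
    ∑ j ∈ Finset.range m, F (u + j) =
      ∑ x ∈ Finset.univ.filter (
        fun x : ZMod (2*n) => (x - u).val < m), F x := by
  refine Finset.sum_nbij' (fun j => u + (j : ZMod (2*n))) (fun x => (x - u).val)
    ?_ ?_ ?_ ?_ ?_
  · intro j hj
    simp only [Finset.mem_range] at hj
    simp only [Finset.mem_filter, Finset.mem_univ, true_and]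
    rw [add_sub_cancel_left, ZMod.val_cast_of_lt (lt_of_lt_of_le hj hm)]
    exact hj
  · intro x hx
    simp only [Finset.mem_filter, Finset.mem_univ, true_and] at hx
    simpa using hx
  · intro j hj
    simp only [Finset.mem_range] at hj
    show (u + (j : ZMod (2*n)) - u).val = j
    rw [add_sub_cancel_left, ZMod.val_cast_of_lt (lt_of_lt_of_le hj hm)]
  · intro x _
    show u + (((x - u).val : ℕ) : ZMod (2*n)) = x
    rw [ZMod.natCast_val, ZMod.cast_id]
    ring
  · intro j _
    rfl

lemma sum_delta_range [NeZero (2*n)] (G : GaussDiagram n) (u : ZMod (2*n)) (m : ℕ)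
    (hm : m ≤ 2*n) :
    ∑ j ∈ Finset.range m, G.delta (u + j) =
      (∑ d ∈ Finset.univ.filter (fun d => (G.over' d - u).val < m), -G.sign d)
        + ∑ d ∈ Finset.univ.filter (fun d => (G.under d - u).val < m), G.sign d := by
  rw [sum_range_eq_sum_filter G.delta u m hm]
  unfold delta
  rw [Finset.sum_add_distrib]
  congr 1
  · rw [Finset.sum_fiberwise_eq_sum_filter]
    apply Finset.sum_congr _ (fun _ _ => rfl)
    apply Finset.filter_congr
    intro d _
    simp
  · rw [Finset.sum_fiberwise_eq_sum_filter]
    apply Finset.sum_congr _ (fun _ _ => rfl)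
    apply Finset.filter_congr
    intro d _
    simp

lemma sum_delta_total [NeZero (2*n)] (G : GaussDiagram n) (u : ZMod (2*n)) :
    ∑ j ∈ Finset.range (2*n), G.delta (u + j) = 0 := by
  rw [G.sum_delta_range u (2*n) le_rfl]
  have h1 : (Finset.univ.filter (fun d : Fin n => (G.over' d - u).val < 2*n))
      = Finset.univ :=
    Finset.filter_true_of_mem (fun d _ => ZMod.val_lt _)
  have h2 : (Finset.univ.filter (fun d : Fin n => (G.under d - u).val < 2*n))
      = Finset.univ :=
    Finset.filter_true_of_mem (fun d _ => ZMod.val_lt _)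
  rw [h1, h2, ← Finset.sum_add_distrib]
  simp

lemma labelFrom_add [NeZero (2*n)] (G : GaussDiagram n) (base a b : ZMod (2*n)) :
    G.labelFrom base a + G.labelFrom a b = G.labelFrom base b := by
  unfold labelFrom
  set va := (a - base).val with hva
  set w := (b - a).val with hw
  set vb := (b - base).val with hvb
  have hva' : va < 2*n := ZMod.val_lt _
  have hw' : w < 2*n := ZMod.val_lt _
  have hvb' : vb < 2*n := ZMod.val_lt _
  have hmod : (va + w) % (2*n) = vb := by
    rw [hva, hw, ← ZMod.val_add, hvb]
    congr 1
    ring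
  have ha : base + (va : ZMod (2*n)) = a := by
    rw [hva, ZMod.natCast_val, ZMod.cast_id]
    ring
  have key : ∑ j ∈ Finset.range va, G.delta (base + j + 1)
      + ∑ j ∈ Finset.range w, G.delta (a + j + 1)
      = ∑ j ∈ Finset.range (va + w), G.delta (base + j + 1) := by
    rw [Finset.sum_range_add]
    congr 1
    apply Finset.sum_congr rfl
    intro j _
    congr 1
    rw [← ha]
    push_cast
    ring
  rw [key]
  rcases lt_or_ge (va + w) (2*n) with h | h
  · have heq : va + w = vb := by
      rw [← hmod, Nat.mod_eq_of_lt h]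
    rw [heq]
  · have hsplit : va + w = vb + 2*n := by
      have h4 : va + w = (va + w - 2*n) + 2*n := by omega
      rw [h4, Nat.add_mod_right, Nat.mod_eq_of_lt (by omega)] at hmod
      omega
    rw [hsplit, Finset.sum_range_add]
    have hzero : ∑ j ∈ Finset.range (2*n), G.delta (base + ((vb + j : ℕ) : ZMod (2*n)) + 1)
        = 0 := by
      rw [← G.sum_delta_total (base + (vb : ZMod (2*n)) + 1)]
      apply Finset.sum_congr rfl
      intro j _
      congr 1
      push_cast
      ring
    rw [hzero, add_zero]

lemma mem_arc_iff [NeZero (2*n)] {o u x : ZMod (2*n)} (ho : o ≠ u) (hx : x ≠ o) :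
    (x - u).val < (o - u).val ↔ ¬ Between o u x := by
  unfold Between
  have hq0 : o - u ≠ 0 := sub_ne_zero.mpr ho
  haveI : NeZero (o - u) := ⟨hq0⟩
  have hQ0 : 0 < (o - u).val :=
    Nat.pos_of_ne_zero (fun h => hq0 ((ZMod.val_eq_zero _).mp h))
  have hPN : (x - u).val < 2*n := ZMod.val_lt _
  have hQN : (o - u).val < 2*n := ZMod.val_lt _
  have hPQ : (x - u).val ≠ (o - u).val := by
    intro h
    exact hx (sub_left_inj.mp (ZMod.val_injective (2*n) h))
  have hneg : (u - o).val = 2*n - (o - u).val := by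
    have h3 : u - o = -(o - u) := by ring
    rw [h3, ZMod.val_neg_of_ne_zero]
  have hsub : (x - o).val = ((x - u).val + (2*n - (o - u).val)) % (2*n) := by
    have h1 : x - o = (x - u) + (-(o - u)) := by ring
    rw [h1, ZMod.val_add, ZMod.val_neg_of_ne_zero]
  simp only [hneg, hsub, ne_eq, hx, not_false_iff, and_true]
  rcases lt_or_ge (x - u).val (o - u).val with h | h
  · rw [Nat.mod_eq_of_lt (by omega)]
    omega
  · have h1 : (x - u).val + (2*n - (o - u).val) = ((x - u).val - (o - u).val) + 2*n := by
      omega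
    rw [h1, Nat.add_mod_right, Nat.mod_eq_of_lt (by omega)]
    omega

lemma labelFrom_under_over [NeZero (2*n)] (G : GaussDiagram n) (c : Fin n) :
    G.labelFrom (G.under c - 1) (G.over' c - 1) = G.wriggle c + G.sign c := by
  have hne : ∀ (d : Fin n) (b1 b2 : Bool), d ≠ c →
      (if b1 then G.over' d else G.under d) ≠ (if b2 then G.over' c else G.under c) := by
    intro d b1 b2 hdc h
    have h2 := G.endpoints_inj (a₁ := (d, b1)) (a₂ := (c, b2)) h
    exact hdc (congrArg Prod.fst h2)
  have hou : G.over' c ≠ G.under c := by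
    intro h
    have h2 := G.endpoints_inj (a₁ := (c, true)) (a₂ := (c, false)) (by simpa using h)
    simp at h2
  set m := (G.over' c - G.under c).val with hm
  have hm_pos : 0 < m :=
    Nat.pos_of_ne_zero (fun h => hou (sub_eq_zero.mp ((ZMod.val_eq_zero _).mp h)))
  have hm_lt : m < 2*n := ZMod.val_lt _
  have hstep : G.labelFrom (G.under c - 1) (G.over' c - 1)
      = ∑ j ∈ Finset.range m, G.delta (G.under c + j) := by
    unfold labelFrom
    have he : (G.over' c - 1 - (G.under c - 1)).val = m := by
      rw [hm]
      congr 1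
      ring
    rw [he]
    apply Finset.sum_congr rfl
    intro j _
    congr 1
    ring
  rw [hstep, G.sum_delta_range _ m (le_of_lt hm_lt)]
  have hoc : ∀ x : ZMod (2*n), x ≠ G.over' c →
      ((x - G.under c).val < m ↔ ¬ Between (G.over' c) (G.under c) x) :=
    fun x hx => mem_arc_iff hou hx
  have key : ∀ d : Fin n,
      (if (G.over' d - G.under c).val < m then -G.sign d else 0)
        + (if (G.under d - G.under c).val < m then G.sign d else 0)
      = (if G.PosAt c d then G.sign d else 0) - (if G.NegAt c d then G.sign d else 0)
        + (if d = c then G.sign d else 0) := by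
    intro d
    by_cases hdc : d = c
    · subst hdc
      have hA : ¬ ((G.over' d - G.under d).val < m) := by
        rw [hm]
        exact lt_irrefl _
      have hB : (G.under d - G.under d).val < m := by simpa using hm_pos
      have hP : ¬ G.PosAt d d := fun h => h.2.2 rfl
      have hN : ¬ G.NegAt d d := fun h => lt_irrefl _ h.2.1
      simp [hA, hB, hP, hN]
      intro h
      exact absurd h hm_pos.ne'
    · have hoo : G.over' d ≠ G.over' c := by simpa using hne d true true hdc
      have huo : G.under d ≠ G.over' c := by simpa using hne d false true hdc
      have hA : ((G.over' d - G.under c).val < m) ↔ ¬ G.onComp1 c (G.over' d) := hoc _ hoo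
      have hB : ((G.under d - G.under c).val < m) ↔ ¬ G.onComp1 c (G.under d) := hoc _ huo
      by_cases hP : G.onComp1 c (G.over' d) <;> by_cases hQ : G.onComp1 c (G.under d) <;>
        simp [PosAt, NegAt, Crosses, Xor', hP, hQ, hA, hB, hdc]
  have hL : (∑ d ∈ Finset.univ.filter (fun d => (G.over' d - G.under c).val < m), -G.sign d)
      + ∑ d ∈ Finset.univ.filter (fun d => (G.under d - G.under c).val < m), G.sign d
      = ∑ d : Fin n, ((if G.PosAt c d then G.sign d else 0)
          - (if G.NegAt c d then G.sign d else 0) + (if d = c then G.sign d else 0)) := by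
    rw [Finset.sum_filter, Finset.sum_filter, ← Finset.sum_add_distrib]
    exact Finset.sum_congr rfl (fun d _ => key d)
  rw [hL, Finset.sum_add_distrib, Finset.sum_sub_distrib]
  unfold wriggle
  rw [Finset.sum_filter, Finset.sum_filter]
  simp

end GaussDiagram

open GaussDiagram

/-- For every crossing `c` of a virtual knot diagram, the Affine Index
Polynomial weight `W_±(c)` computed from the integer labeling of the arcs (based at any
arc) equals the wriggle number `W(L_c)` of the link obtained by orientedly smoothing `c`;
consequently the Wriggle Polynomial equals the Affine Index Polynomial. -/
theorem affineWeight_eq_wriggle {n : ℕ} (G : GaussDiagram n) (base : ZMod (2 * n)) :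
    (∀ c : Fin n, G.affineWeight base c = G.wriggle c) ∧
      G.affinePoly base = G.wrigglePoly := by
  have h1 : ∀ c : Fin n, G.affineWeight base c = G.wriggle c := by
    intro c
    haveI : NeZero (2*n) := ⟨by have := c.2; omega⟩
    have hdiff : G.labelFrom base (G.over' c - 1) - G.labelFrom base (G.under c - 1)
        = G.wriggle c + G.sign c := by
      have h2 := G.labelFrom_add base (G.under c - 1) (G.over' c - 1)
      have h3 := G.labelFrom_under_over c
      linarith
    unfold affineWeight weightWith
    rcases G.sign_pm c with hs | hs
    · rw [if_pos hs]
      rw [hs] at hdiff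
      linarith
    · rw [if_neg (by rw [hs]; norm_num)]
      rw [hs] at hdiff
      linarith
  refine ⟨h1, ?_⟩
  unfold affinePoly wrigglePoly
  congr 1
  exact Finset.sum_congr rfl (fun c _ => by rw [h1 c])
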